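/- Let X and Y be two density operators on a d-dimensional complex Hilbert space with ‖X − Y‖₁ ≤ μ < 1/e. Then |S(X) − S(Y)| ≤ μ log d − μ log μ, where S denotes the von Neumann entropy. -/

import Mathlib

open scoped BigOperators
open Matrix Filter Topology
open scoped ComplexOrder

/-- The positive semidefinite square root of a positive semidefinite matrix
(the definition `Matrix.PosSemidef.sqrt` of the older Mathlib, since removed). -/
noncomputable def Matrix.PosSemidef.sqrt {n 𝕜 : Type*} [Fintype n] [DecidableEq n] [RCLike 𝕜]
    {A : Matrix n n 𝕜} (hA : A.PosSemidef) : Matrix n n 𝕜 :=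
  (hA.1.eigenvectorUnitary : Matrix n n 𝕜) * diagonal ((↑) ∘ (Real.sqrt ∘ hA.1.eigenvalues)) *
    (star hA.1.eigenvectorUnitary : Matrix n n 𝕜)

/-- Trace norm (sum of singular values) of a complex matrix. -/
noncomputable def traceNorm {ι : Type*} [Fintype ι] [DecidableEq ι]
    (A : Matrix ι ι ℂ) : ℝ :=
  ((Matrix.posSemidef_conjTranspose_mul_self A).sqrt.trace).re

/-- A density operator: positive semidefinite with unit trace. -/
def IsDensity {ι : Type*} [Fintype ι] (ρ : Matrix ι ι ℂ) : Prop :=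
  ρ.PosSemidef ∧ ρ.trace = 1

/-- Von Neumann entropy `S(ρ) = -tr(ρ log ρ)` (base-2 logarithm), via eigenvalues. -/
noncomputable def vnEntropy {ι : Type*} [Fintype ι] [DecidableEq ι]
    (ρ : Matrix ι ι ℂ) : ℝ :=
  if h : ρ.IsHermitian then -∑ i, h.eigenvalues i * Real.logb 2 (h.eigenvalues i) else 0

/-- Holevo quantity `χ(P, {ρ_x})`. -/
noncomputable def holevo {X ι : Type*} [Fintype X] [Fintype ι] [DecidableEq ι]
    (P : X → ℝ) (ρ : X → Matrix ι ι ℂ) : ℝ :=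
  vnEntropy (∑ x, (P x : ℂ) • ρ x) - ∑ x, P x * vnEntropy (ρ x)

/-- The set of probability distributions on a finite type. -/
def FinDist (α : Type*) [Fintype α] : Type _ :=
  {p : α → ℝ // (∀ a, 0 ≤ p a) ∧ ∑ a, p a = 1}

/-- Tensor-product state corresponding to a codeword and a state sequence. -/
noncomputable def prodState {d n : ℕ} {X Θ' : Type*}
    (ρ : X → Θ' → Matrix (Fin d) (Fin d) ℂ) (c : Fin n → X) (t : Fin n → Θ') :
    Matrix (Fin n → Fin d) (Fin n → Fin d) ℂ :=
  fun a b => ∏ i, ρ (c i) (t i) (a i) (b i)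

/-- A POVM: positive semidefinite operators summing to the identity. -/
def IsPOVM {ι κ : Type*} [Fintype ι] [DecidableEq ι] [Fintype κ]
    (D : κ → Matrix ι ι ℂ) : Prop :=
  (∀ j, (D j).PosSemidef) ∧ ∑ j, D j = 1

/-- Average decoding error of a code under state sequence `t`. -/
noncomputable def avgError {d n : ℕ} {X Θ' : Type*} {J : ℕ}
    (ρ : X → Θ' → Matrix (Fin d) (Fin d) ℂ)
    (c : Fin J → Fin n → X)
    (D : Fin J → Matrix (Fin n → Fin d) (Fin n → Fin d) ℂ)
    (t : Fin n → Θ') : ℝ :=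
  1 - (1 / (J : ℝ)) * ∑ j, ((prodState ρ (c j) t * D j).trace).re

/-- Holevo quantity of an ensemble with uniform distribution. -/
noncomputable def uniformHolevo {ι : Type*} [Fintype ι] [DecidableEq ι] {J : ℕ}
    (τ : Fin J → Matrix ι ι ℂ) : ℝ :=
  vnEntropy ((J : ℂ)⁻¹ • ∑ j, τ j) - (1 / (J : ℝ)) * ∑ j, vnEntropy (τ j)

/-- Symmetrizability of a classical-quantum arbitrarily varying channel. -/
def Symmetrizable {d : ℕ} {X Θ' : Type*} [Fintype X] [Fintype Θ']
    (ρ : X → Θ' → Matrix (Fin d) (Fin d) ℂ) : Prop :=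
  ∃ U : X → Θ' → ℝ, (∀ x, (∀ t, 0 ≤ U x t) ∧ ∑ t, U x t = 1) ∧
    ∀ x x', ∑ t, (U x t : ℂ) • ρ x' t = ∑ t, (U x' t : ℂ) • ρ x t

/-- `R` is an achievable secrecy rate for the cq arbitrarily varying wiretap channel (no CSI). -/
def AchievableSecrecyRate {d : ℕ} {X Θ' : Type*} [Fintype X] [Fintype Θ']
    (ρ σ : X → Θ' → Matrix (Fin d) (Fin d) ℂ) (R : ℝ) : Prop :=
  ∀ ε > (0:ℝ), ∀ δ > (0:ℝ), ∀ ζ > (0:ℝ), ∃ N : ℕ, ∀ n ≥ N,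
    ∃ J : ℕ, 0 < J ∧ ∃ c : Fin J → Fin n → X,
      ∃ D : Fin J → Matrix (Fin n → Fin d) (Fin n → Fin d) ℂ, IsPOVM D ∧
        Real.logb 2 J / n > R - δ ∧
        (∀ t : Fin n → Θ', avgError ρ c D t < ε) ∧
        (∀ t : Fin n → Θ',
          (1 / (n : ℝ)) * uniformHolevo (fun j => prodState σ (c j) t) < ζ)

/-- `R` is an achievable secrecy rate with CSI at the transmitter. -/
def AchievableSecrecyRateCSI {d : ℕ} {X Θ' : Type*} [Fintype X] [Fintype Θ']
    (ρ σ : X → Θ' → Matrix (Fin d) (Fin d) ℂ) (R : ℝ) : Prop :=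
  ∀ ε > (0:ℝ), ∀ δ > (0:ℝ), ∀ ζ > (0:ℝ), ∃ N : ℕ, ∀ n ≥ N,
    ∃ J : ℕ, 0 < J ∧ ∃ c : (Fin n → Θ') → Fin J → Fin n → X,
      ∃ D : Fin J → Matrix (Fin n → Fin d) (Fin n → Fin d) ℂ, IsPOVM D ∧
        Real.logb 2 J / n > R - δ ∧
        (∀ t : Fin n → Θ', avgError ρ (c t) D t < ε) ∧
        (∀ t : Fin n → Θ',
          (1 / (n : ℝ)) * uniformHolevo (fun j => prodState σ (c t j) t) < ζ)

/-- Secrecy capacity (no CSI). -/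
noncomputable def secrecyCapacity {d : ℕ} {X Θ' : Type*} [Fintype X] [Fintype Θ']
    (ρ σ : X → Θ' → Matrix (Fin d) (Fin d) ℂ) : ℝ :=
  sSup {R : ℝ | 0 ≤ R ∧ AchievableSecrecyRate ρ σ R}

/-- Secrecy capacity with CSI at the transmitter. -/
noncomputable def secrecyCapacityCSI {d : ℕ} {X Θ' : Type*} [Fintype X] [Fintype Θ']
    (ρ σ : X → Θ' → Matrix (Fin d) (Fin d) ℂ) : ℝ :=
  sSup {R : ℝ | 0 ≤ R ∧ AchievableSecrecyRateCSI ρ σ R}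

/-- An orthogonal projection. -/
def IsProj {ι : Type*} [Fintype ι] (Q : Matrix ι ι ℂ) : Prop :=
  Qᴴ = Q ∧ Q * Q = Q

/-- Spectral projector of a Hermitian matrix onto the eigenvalues lying in `[lo, hi]`. -/
noncomputable def specProj {ι : Type*} [Fintype ι] [DecidableEq ι] {ρ : Matrix ι ι ℂ}
    (h : ρ.IsHermitian) (lo hi : ℝ) : Matrix ι ι ℂ :=
  (h.eigenvectorUnitary : Matrix ι ι ℂ) *
    Matrix.diagonal
      (fun k => if lo ≤ h.eigenvalues k ∧ h.eigenvalues k ≤ hi then (1 : ℂ) else 0) *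
    (h.eigenvectorUnitary : Matrix ι ι ℂ)ᴴ

/-- Tensor product of a family of `d × d` matrices. -/
noncomputable def tensorFam {d n : ℕ} (M : Fin n → Matrix (Fin d) (Fin d) ℂ) :
    Matrix (Fin n → Fin d) (Fin n → Fin d) ℂ :=
  Matrix.of fun a b => ∏ i, M i (a i) (b i)

open Classical in
noncomputable def invSqrt {ι : Type*} [Fintype ι] [DecidableEq ι]
    (M : Matrix ι ι ℂ) : Matrix ι ι ℂ :=
  if h : M.PosSemidef then (h.sqrt)⁻¹ else 0


variable {n : Type*} [Fintype n] [DecidableEq n]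

namespace Fannes

variable {n : Type*} [Fintype n] [DecidableEq n]

lemma trace_eq_sum_eigenvalues {A : Matrix n n ℂ} (hA : A.IsHermitian) :
    A.trace = ∑ i, (hA.eigenvalues i : ℂ) := by
  conv_lhs => rw [hA.spectral_theorem, Unitary.conjStarAlgAut_apply]
  rw [Matrix.trace_mul_cycle, Unitary.coe_star_mul_self, Matrix.one_mul]
  simp [Matrix.trace_diagonal]


variable {n : Type*} [Fintype n] [DecidableEq n]

/-- conjugation of a real diagonal by the eigenvector unitary -/
noncomputable def conjDiag {A : Matrix n n ℂ} (hA : A.IsHermitian) (g : n → ℝ) : Matrix n n ℂ :=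
  (hA.eigenvectorUnitary : Matrix n n ℂ) * Matrix.diagonal (fun i => (g i : ℂ)) *
    (star hA.eigenvectorUnitary : Matrix n n ℂ)

lemma conjDiag_posSemidef {A : Matrix n n ℂ} (hA : A.IsHermitian) {g : n → ℝ}
    (hg : ∀ i, 0 ≤ g i) : (conjDiag hA g).PosSemidef := by
  have h : Matrix.PosSemidef (Matrix.diagonal (fun i => (g i : ℂ))) :=
    Matrix.PosSemidef.diagonal (by
      intro i
      simp only
      rw [Complex.le_def]
      simpa using hg i)
  simpa [conjDiag, Matrix.star_eq_conjTranspose] using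
    h.mul_mul_conjTranspose_same (hA.eigenvectorUnitary : Matrix n n ℂ)

lemma conjDiag_mul {A : Matrix n n ℂ} (hA : A.IsHermitian) (g g' : n → ℝ) :
    conjDiag hA g * conjDiag hA g' = conjDiag hA (fun i => g i * g' i) := by
  simp only [conjDiag, Matrix.mul_assoc]
  rw [← Matrix.mul_assoc (star (hA.eigenvectorUnitary : Matrix n n ℂ)),
    Unitary.coe_star_mul_self, Matrix.one_mul, ← Matrix.mul_assoc (Matrix.diagonal _),
    Matrix.diagonal_mul_diagonal]
  push_cast
  rfl

lemma conjDiag_trace {A : Matrix n n ℂ} (hA : A.IsHermitian) (g : n → ℝ) :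
    (conjDiag hA g).trace = ∑ i, (g i : ℂ) := by
  rw [conjDiag, Matrix.trace_mul_cycle, Unitary.coe_star_mul_self,
    Matrix.one_mul, Matrix.trace_diagonal]

lemma conjDiag_eigenvalues {A : Matrix n n ℂ} (hA : A.IsHermitian) :
    conjDiag hA hA.eigenvalues = A := by
  rw [conjDiag]
  exact (hA.spectral_theorem).symm

lemma conjDiag_sub {A : Matrix n n ℂ} (hA : A.IsHermitian) (g g' : n → ℝ) :
    conjDiag hA g - conjDiag hA g' = conjDiag hA (fun i => g i - g' i) := by
  simp only [conjDiag]
  rw [← Matrix.sub_mul, ← Matrix.mul_sub, Matrix.diagonal_sub]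
  push_cast
  rfl

lemma conjDiag_add {A : Matrix n n ℂ} (hA : A.IsHermitian) (g g' : n → ℝ) :
    conjDiag hA g + conjDiag hA g' = conjDiag hA (fun i => g i + g' i) := by
  simp only [conjDiag]
  rw [← Matrix.add_mul, ← Matrix.mul_add, Matrix.diagonal_add]
  push_cast
  rfl

lemma conjDiag_isHermitian {A : Matrix n n ℂ} (hA : A.IsHermitian) (g : n → ℝ) :
    (conjDiag hA g).IsHermitian := by
  have hd : (Matrix.diagonal (fun i => (g i : ℂ))).IsHermitian :=
    Matrix.isHermitian_diagonal_of_self_adjoint _ (funext fun i => Complex.conj_ofReal _)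
  simpa [conjDiag, Matrix.star_eq_conjTranspose] using
    Matrix.isHermitian_mul_mul_conjTranspose (hA.eigenvectorUnitary : Matrix n n ℂ) hd

theorem traceNorm_hermitian {A : Matrix n n ℂ} (hA : A.IsHermitian) :
    traceNorm A = ∑ i, |hA.eigenvalues i| := by
  unfold traceNorm
  have hB : (conjDiag hA (fun i => |hA.eigenvalues i|)).PosSemidef :=
    conjDiag_posSemidef hA (fun i => abs_nonneg _)
  have hsq : (conjDiag hA (fun i => |hA.eigenvalues i|)) ^ 2 = Aᴴ * A := by
    rw [pow_two, conjDiag_mul, hA.eq]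
    conv_rhs => rw [← conjDiag_eigenvalues hA, conjDiag_mul]
    have : (fun i => |hA.eigenvalues i| * |hA.eigenvalues i|)
        = fun i => hA.eigenvalues i * hA.eigenvalues i :=
      funext fun i => abs_mul_abs_self _
    rw [this]
  have : conjDiag hA (fun i => |hA.eigenvalues i|)
      = (Matrix.posSemidef_conjTranspose_mul_self A).sqrt := by
    open scoped MatrixOrder in
    have hP := Matrix.posSemidef_conjTranspose_mul_self A
    have e1 : hP.sqrt = cfc Real.sqrt (Aᴴ * A) := by
      rw [hP.1.cfc_eq]
      simp [Matrix.PosSemidef.sqrt, Matrix.IsHermitian.cfc, Function.comp_def]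
    rw [e1, ← cfcₙ_eq_cfc (hf0 := Real.sqrt_zero), ← CFC.sqrt_eq_real_sqrt _ hP.nonneg,
      ← hsq, pow_two, CFC.sqrt_mul_self _ hB.nonneg]
  rw [← this, conjDiag_trace]
  simp


variable {n : Type*} [Fintype n] [DecidableEq n]

noncomputable def evec {A : Matrix n n ℂ} (hA : A.IsHermitian) (k : n) : n → ℂ :=
  ⇑(hA.eigenvectorBasis k)

lemma evec_mulVec {A : Matrix n n ℂ} (hA : A.IsHermitian) (k : n) :
    A *ᵥ evec hA k = (hA.eigenvalues k : ℂ) • evec hA k := by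
  rw [evec, hA.mulVec_eigenvectorBasis]
  ext i
  simp [Complex.real_smul]

lemma evec_ortho {A : Matrix n n ℂ} (hA : A.IsHermitian) (j k : n) :
    star (evec hA j) ⬝ᵥ evec hA k = if j = k then 1 else 0 := by
  have h := (orthonormal_iff_ite.mp hA.eigenvectorBasis.orthonormal) j k
  rw [EuclideanSpace.inner_eq_star_dotProduct, dotProduct_comm] at h
  exact h

lemma sum_dotProduct' {S : Finset n} (f : n → n → ℂ) (w : n → ℂ) :
    (∑ k ∈ S, f k) ⬝ᵥ w = ∑ k ∈ S, f k ⬝ᵥ w := by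
  simp only [dotProduct, Finset.sum_apply, Finset.sum_mul]
  rw [Finset.sum_comm]

lemma dotProduct_sum' {S : Finset n} (v : n → ℂ) (f : n → n → ℂ) :
    v ⬝ᵥ (∑ k ∈ S, f k) = ∑ k ∈ S, v ⬝ᵥ f k := by
  simp only [dotProduct, Finset.sum_apply, Finset.mul_sum]
  rw [Finset.sum_comm]

lemma star_sum_dot {S : Finset n} {A : Matrix n n ℂ} (hA : A.IsHermitian)
    (c e : n → ℂ) :
    star (∑ k ∈ S, c k • evec hA k) ⬝ᵥ (∑ k ∈ S, e k • evec hA k)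
      = ∑ k ∈ S, (starRingEnd ℂ) (c k) * e k := by
  rw [star_sum, sum_dotProduct']
  have : ∀ j ∈ S, star (c j • evec hA j) ⬝ᵥ (∑ k ∈ S, e k • evec hA k)
      = (starRingEnd ℂ) (c j) * e j := by
    intro j hj
    rw [star_smul, smul_dotProduct, dotProduct_sum']
    have : ∀ k ∈ S, star (evec hA j) ⬝ᵥ (e k • evec hA k)
        = if j = k then e k else 0 := by
      intro k hk
      rw [dotProduct_smul, evec_ortho]
      simp [mul_ite]
    rw [Finset.sum_congr rfl this, Finset.sum_ite_eq _ j, if_pos hj]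
    simp [mul_comm]
  rw [Finset.sum_congr rfl this]


variable {n : Type*} [Fintype n] [DecidableEq n]

noncomputable def Vspan {A : Matrix n n ℂ} (hA : A.IsHermitian) (S : Finset n) :
    Submodule ℂ (n → ℂ) :=
  Submodule.span ℂ (Set.range (fun k : S => evec hA k))

lemma exists_rep_of_mem_Vspan {A : Matrix n n ℂ} (hA : A.IsHermitian) {S : Finset n}
    {v : n → ℂ} (hv : v ∈ Vspan hA S) :
    ∃ c : n → ℂ, v = ∑ k ∈ S, c k • evec hA k := by
  rw [Vspan, Submodule.mem_span_range_iff_exists_fun] at hv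
  obtain ⟨c, hc⟩ := hv
  refine ⟨fun k => if h : k ∈ S then c ⟨k, h⟩ else 0, ?_⟩
  rw [← hc, ← Finset.sum_attach S (fun k => (if h : k ∈ S then c ⟨k, h⟩ else 0) • evec hA k),
    ← Finset.univ_eq_attach]
  apply Finset.sum_congr rfl
  intro k _
  rw [dif_pos k.2]

lemma linearIndependent_evec {A : Matrix n n ℂ} (hA : A.IsHermitian) :
    LinearIndependent ℂ (evec hA) := by
  have h1 : LinearIndependent ℂ (hA.eigenvectorBasis : n → EuclideanSpace ℂ n) :=
    hA.eigenvectorBasis.orthonormal.linearIndependent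
  have h2 := h1.map' (WithLp.linearEquiv 2 ℂ (n → ℂ)).toLinearMap
    (LinearEquiv.ker _)
  exact h2

lemma finrank_Vspan {A : Matrix n n ℂ} (hA : A.IsHermitian) (S : Finset n) :
    Module.finrank ℂ (Vspan hA S) = S.card := by
  rw [Vspan]
  have hli : LinearIndependent ℂ (fun k : S => evec hA k) :=
    (linearIndependent_evec hA).comp _ Subtype.val_injective
  rw [finrank_span_eq_card hli, Fintype.card_coe]

lemma vspan_inter_ne_bot {A B : Matrix n n ℂ} (hA : A.IsHermitian) (hB : B.IsHermitian)
    {S T : Finset n} (hcard : Fintype.card n < S.card + T.card) :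
    ∃ v : n → ℂ, v ≠ 0 ∧ v ∈ Vspan hA S ∧ v ∈ Vspan hB T := by
  have hle : Module.finrank ℂ ((Vspan hA S) ⊔ (Vspan hB T) : Submodule ℂ (n → ℂ))
      ≤ Fintype.card n := by
    simpa using Submodule.finrank_le ((Vspan hA S) ⊔ (Vspan hB T))
  have heq := Submodule.finrank_sup_add_finrank_inf_eq (Vspan hA S) (Vspan hB T)
  rw [finrank_Vspan, finrank_Vspan] at heq
  have hpos : 0 < Module.finrank ℂ ((Vspan hA S) ⊓ (Vspan hB T) : Submodule ℂ (n → ℂ)) := by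
    omega
  have hne : (Vspan hA S) ⊓ (Vspan hB T) ≠ ⊥ := by
    intro h
    rw [h] at hpos
    simp at hpos
  obtain ⟨v, hv, hv0⟩ := Submodule.exists_mem_ne_zero_of_ne_bot hne
  exact ⟨v, hv0, hv.1, hv.2⟩


variable {n : Type*} [Fintype n] [DecidableEq n]

lemma quad_form_eval {A : Matrix n n ℂ} (hA : A.IsHermitian) {S : Finset n} (c : n → ℂ) :
    star (∑ k ∈ S, c k • evec hA k) ⬝ᵥ (A *ᵥ (∑ k ∈ S, c k • evec hA k))
      = ((∑ k ∈ S, hA.eigenvalues k * Complex.normSq (c k) : ℝ) : ℂ) := by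
  have hmv : A *ᵥ (∑ k ∈ S, c k • evec hA k)
      = ∑ k ∈ S, ((hA.eigenvalues k : ℂ) * c k) • evec hA k := by
    rw [← Matrix.mulVecLin_apply, map_sum]
    apply Finset.sum_congr rfl
    intro k _
    rw [_root_.map_smul, Matrix.mulVecLin_apply, evec_mulVec, smul_smul, mul_comm]
  rw [hmv, star_sum_dot]
  push_cast
  apply Finset.sum_congr rfl
  intro k _
  rw [Complex.normSq_eq_conj_mul_self]
  ring

lemma norm_form_eval {A : Matrix n n ℂ} (hA : A.IsHermitian) {S : Finset n} (c : n → ℂ) :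
    star (∑ k ∈ S, c k • evec hA k) ⬝ᵥ (∑ k ∈ S, c k • evec hA k)
      = ((∑ k ∈ S, Complex.normSq (c k) : ℝ) : ℂ) := by
  rw [star_sum_dot]
  push_cast
  apply Finset.sum_congr rfl
  intro k _
  rw [Complex.normSq_eq_conj_mul_self]

lemma redot_pos {v : n → ℂ} (hv : v ≠ 0) : 0 < (star v ⬝ᵥ v).re := by
  have h : (star v ⬝ᵥ v).re = ∑ i, Complex.normSq (v i) := by
    rw [dotProduct, Complex.re_sum]
    apply Finset.sum_congr rfl
    intro i _
    simp [Complex.normSq_apply, Complex.mul_re]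
  rw [h]
  obtain ⟨i, hi⟩ := Function.ne_iff.mp hv
  exact Finset.sum_pos' (fun j _ => Complex.normSq_nonneg _)
    ⟨i, Finset.mem_univ i, by simpa using Complex.normSq_pos.mpr hi⟩

lemma rayleigh_le {A : Matrix n n ℂ} (hA : A.IsHermitian) {S : Finset n} {r : ℝ}
    (hS : ∀ k ∈ S, hA.eigenvalues k ≤ r) {v : n → ℂ} (hv : v ∈ Vspan hA S) :
    (star v ⬝ᵥ (A *ᵥ v)).re ≤ r * (star v ⬝ᵥ v).re := by
  obtain ⟨c, rfl⟩ := exists_rep_of_mem_Vspan hA hv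
  rw [quad_form_eval hA c, norm_form_eval hA c, Complex.ofReal_re, Complex.ofReal_re,
    Finset.mul_sum]
  exact Finset.sum_le_sum fun k hk =>
    mul_le_mul_of_nonneg_right (hS k hk) (Complex.normSq_nonneg _)

lemma rayleigh_ge {A : Matrix n n ℂ} (hA : A.IsHermitian) {S : Finset n} {r : ℝ}
    (hS : ∀ k ∈ S, r ≤ hA.eigenvalues k) {v : n → ℂ} (hv : v ∈ Vspan hA S) :
    r * (star v ⬝ᵥ v).re ≤ (star v ⬝ᵥ (A *ᵥ v)).re := by
  obtain ⟨c, rfl⟩ := exists_rep_of_mem_Vspan hA hv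
  rw [quad_form_eval hA c, norm_form_eval hA c, Complex.ofReal_re, Complex.ofReal_re,
    Finset.mul_sum]
  exact Finset.sum_le_sum fun k hk =>
    mul_le_mul_of_nonneg_right (hS k hk) (Complex.normSq_nonneg _)

theorem weyl_monotone {d : ℕ} {A B : Matrix (Fin d) (Fin d) ℂ}
    (hA : A.IsHermitian) (hB : B.IsHermitian) (hle : (B - A).PosSemidef) (i : Fin d) :
    hA.eigenvalues (Tuple.sort hA.eigenvalues i) ≤ hB.eigenvalues (Tuple.sort hB.eigenvalues i) := by
  set σ := Tuple.sort hA.eigenvalues with hσ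
  set τ := Tuple.sort hB.eigenvalues with hτ
  set S : Finset (Fin d) := (Finset.Ici i).image σ with hS
  set T : Finset (Fin d) := (Finset.Iic i).image τ with hT
  have hScard : S.card = d - i := by
    rw [hS, Finset.card_image_of_injective _ σ.injective, Fin.card_Ici]
  have hTcard : T.card = i + 1 := by
    rw [hT, Finset.card_image_of_injective _ τ.injective, Fin.card_Iic]
  have hcard : Fintype.card (Fin d) < S.card + T.card := by
    rw [hScard, hTcard, Fintype.card_fin]
    have := i.isLt
    omega
  obtain ⟨v, hv0, hvS, hvT⟩ := vspan_inter_ne_bot hA hB hcard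
  have hAge : ∀ k ∈ S, hA.eigenvalues (σ i) ≤ hA.eigenvalues k := by
    intro k hk
    rw [hS] at hk
    obtain ⟨m, hm, rfl⟩ := Finset.mem_image.mp hk
    exact Tuple.monotone_sort hA.eigenvalues (Finset.mem_Ici.mp hm)
  have hBle : ∀ k ∈ T, hB.eigenvalues k ≤ hB.eigenvalues (τ i) := by
    intro k hk
    rw [hT] at hk
    obtain ⟨m, hm, rfl⟩ := Finset.mem_image.mp hk
    exact Tuple.monotone_sort hB.eigenvalues (Finset.mem_Iic.mp hm)
  have h1 := rayleigh_ge hA hAge hvS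
  have h2 := rayleigh_le hB hBle hvT
  have h3 : (star v ⬝ᵥ (A *ᵥ v)).re ≤ (star v ⬝ᵥ (B *ᵥ v)).re := by
    have h4 := hle.re_dotProduct_nonneg v
    rw [Matrix.sub_mulVec, dotProduct_sub] at h4
    simp only [map_sub, RCLike.re_to_complex] at h4
    linarith [h4]
  have hN := redot_pos hv0
  have := le_trans h1 (le_trans h3 h2)
  exact le_of_mul_le_mul_right (by linarith) hN



/-- sorted (ascending) eigenvalues -/
noncomputable def sortEig {d : ℕ} {A : Matrix (Fin d) (Fin d) ℂ} (hA : A.IsHermitian)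
    (i : Fin d) : ℝ :=
  hA.eigenvalues (Tuple.sort hA.eigenvalues i)

lemma sum_sortEig {d : ℕ} {A : Matrix (Fin d) (Fin d) ℂ} (hA : A.IsHermitian)
    (g : ℝ → ℝ) : ∑ i, g (sortEig hA i) = ∑ k, g (hA.eigenvalues k) :=
  Equiv.sum_comp (Tuple.sort hA.eigenvalues) (fun k => g (hA.eigenvalues k))

theorem eigenvalue_perturbation {d : ℕ} {X Y : Matrix (Fin d) (Fin d) ℂ}
    (hX : X.IsHermitian) (hY : Y.IsHermitian) :
    ∑ i, |sortEig hX i - sortEig hY i| ≤ ∑ k, |(hX.sub hY).eigenvalues k| := by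
  set hC : (X - Y).IsHermitian := hX.sub hY with hhC
  set lam := hC.eigenvalues with hlam
  set Cp := conjDiag hC (fun k => max (lam k) 0) with hCp'
  have hCppsd : Cp.PosSemidef := conjDiag_posSemidef hC (fun k => le_max_right _ _)
  set Cm := conjDiag hC (fun k => max (-lam k) 0) with hCm'
  have hCmpsd : Cm.PosSemidef := conjDiag_posSemidef hC (fun k => le_max_right _ _)
  have hsplit : X - Y = Cp - Cm := by
    rw [hCp', hCm', conjDiag_sub]
    have : (fun k => max (lam k) 0 - max (-lam k) 0) = lam := by
      funext k
      rcases le_total (lam k) 0 with h | h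
      · rw [max_eq_right h, max_eq_left (by linarith)]; ring
      · rw [max_eq_left h, max_eq_right (by linarith)]; ring
    rw [this, conjDiag_eigenvalues]
  set M := Y + Cp with hM'
  have hM : M.IsHermitian := hY.add hCppsd.1
  have h1 : (M - X).PosSemidef := by
    have : M - X = Cm := by
      rw [hM']
      have hx : X = Y + (Cp - Cm) := by rw [← hsplit]; abel
      rw [hx]; abel
    rwa [this]
  have h2 : (M - Y).PosSemidef := by
    have : M - Y = Cp := by rw [hM']; abel
    rwa [this]
  have hw1 : ∀ i, sortEig hX i ≤ sortEig hM i := fun i => weyl_monotone hX hM h1 i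
  have hw2 : ∀ i, sortEig hY i ≤ sortEig hM i := fun i => weyl_monotone hY hM h2 i
  have habs : ∀ i, |sortEig hX i - sortEig hY i|
      ≤ 2 * sortEig hM i - sortEig hX i - sortEig hY i := by
    intro i
    rw [abs_sub_le_iff]
    constructor <;> [linarith [hw1 i, hw2 i]; linarith [hw1 i, hw2 i]]
  calc ∑ i, |sortEig hX i - sortEig hY i|
      ≤ ∑ i, (2 * sortEig hM i - sortEig hX i - sortEig hY i) :=
        Finset.sum_le_sum fun i _ => habs i
    _ = 2 * (∑ i, sortEig hM i) - (∑ i, sortEig hX i) - (∑ i, sortEig hY i) := by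
        rw [Finset.sum_sub_distrib, Finset.sum_sub_distrib, Finset.mul_sum]
    _ = ∑ k, |lam k| := by
        have eM : ∑ i, sortEig hM i = ∑ k, hM.eigenvalues k := by
          simpa using sum_sortEig hM id
        have eX : ∑ i, sortEig hX i = ∑ k, hX.eigenvalues k := by
          simpa using sum_sortEig hX id
        have eY : ∑ i, sortEig hY i = ∑ k, hY.eigenvalues k := by
          simpa using sum_sortEig hY id
        -- traces
        have tM : (M.trace : ℂ) = Y.trace + Cp.trace := by rw [hM', Matrix.trace_add]
        have tsum : ∀ {Z : Matrix (Fin d) (Fin d) ℂ} (hZ : Z.IsHermitian),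
            (Z.trace).re = ∑ k, hZ.eigenvalues k := by
          intro Z hZ
          rw [trace_eq_sum_eigenvalues hZ, Complex.re_sum]
          simp
        have tCp : (Cp.trace).re = ∑ k, max (lam k) 0 := by
          rw [hCp', conjDiag_trace, Complex.re_sum]
          simp
        have hMre := tsum hM
        have hXre := tsum hX
        have hYre := tsum hY
        have hCre := tsum hC
        have htr : (M.trace).re = (Y.trace).re + (Cp.trace).re := by
          rw [tM]; simp
        have htrC : ((X - Y).trace).re = (X.trace).re - (Y.trace).re := by
          rw [Matrix.trace_sub]; simp
        have hfin : ∑ k, |lam k| = 2 * (∑ k, max (lam k) 0) - ∑ k, lam k := by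
          rw [Finset.mul_sum, ← Finset.sum_sub_distrib]
          apply Finset.sum_congr rfl
          intro k _
          rcases le_total (lam k) 0 with h | h
          · rw [max_eq_right h, abs_of_nonpos h]; ring
          · rw [max_eq_left h, abs_of_nonneg h]; ring
        rw [eM, eX, eY]
        have hlamC : ∑ k, lam k = ∑ k, hC.eigenvalues k := rfl
        linarith [hMre, hXre, hYre, hCre, htr, htrC, tCp, hfin, hlamC]



lemma self_le_negMulLog {s : ℝ} (hs0 : 0 ≤ s) (hse : s ≤ Real.exp (-1)) :
    s ≤ Real.negMulLog s := by
  rcases eq_or_lt_of_le hs0 with h | h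
  · simp [← h]
  · have hls : Real.log s ≤ -1 := (Real.log_le_iff_le_exp h).mpr hse
    rw [Real.negMulLog]
    nlinarith

lemma negMulLog_diff_le {b s : ℝ} (hb0 : 0 ≤ b) (hs0 : 0 ≤ s) (hbs : b + s ≤ 1)
    (hse : s ≤ Real.exp (-1)) :
    |Real.negMulLog (b + s) - Real.negMulLog b| ≤ Real.negMulLog s := by
  rcases eq_or_lt_of_le hs0 with h | hs
  · simp [← h]
  rcases eq_or_lt_of_le hb0 with h | hb
  · rw [← h, zero_add, Real.negMulLog_zero, sub_zero, abs_of_nonneg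
      (Real.negMulLog_nonneg hs0 (by linarith))]
  have hsle : s ≤ Real.negMulLog s := self_le_negMulLog hs0 hse
  have hbspos : 0 < b + s := by linarith
  have hlog_b_bs : Real.log b ≤ Real.log (b + s) := Real.log_le_log hb (by linarith)
  have hlog_s_bs : Real.log s ≤ Real.log (b + s) := Real.log_le_log hs (by linarith)
  have hlog_bs_np : Real.log (b + s) ≤ 0 := Real.log_nonpos (le_of_lt hbspos) hbs
  have hexp : (b + s) * Real.log (b + s)
      = b * Real.log (b + s) + s * Real.log (b + s) := by ring
  have hslogbs : s * Real.log (b + s) ≤ 0 :=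
    mul_nonpos_of_nonneg_of_nonpos (le_of_lt hs) hlog_bs_np
  rw [abs_le]
  constructor
  · have hx : Real.log ((b + s) / b) ≤ (b + s) / b - 1 :=
      Real.log_le_sub_one_of_pos (by positivity)
    have hlogdiv : Real.log ((b + s) / b) = Real.log (b + s) - Real.log b :=
      Real.log_div (by positivity) (ne_of_gt hb)
    rw [hlogdiv] at hx
    have hkey : b * Real.log (b + s) - b * Real.log b ≤ s := by
      have h5 : b * (Real.log (b + s) - Real.log b) ≤ b * ((b + s) / b - 1) :=
        mul_le_mul_of_nonneg_left hx hb0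
      have heq : b * ((b + s) / b - 1) = s := by field_simp; ring
      nlinarith [h5]
    simp only [Real.negMulLog] at hsle ⊢
    nlinarith [hkey, hslogbs, hsle, hexp]
  · have h6 : b * Real.log b ≤ b * Real.log (b + s) :=
      mul_le_mul_of_nonneg_left hlog_b_bs hb0
    have h7 : s * Real.log s ≤ s * Real.log (b + s) :=
      mul_le_mul_of_nonneg_left hlog_s_bs (le_of_lt hs)
    simp only [Real.negMulLog]
    nlinarith [h6, h7, hexp]

lemma negMulLog_abs_diff_le {a b : ℝ} (ha0 : 0 ≤ a) (ha1 : a ≤ 1) (hb0 : 0 ≤ b)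
    (hb1 : b ≤ 1) (habe : |a - b| ≤ Real.exp (-1)) :
    |Real.negMulLog a - Real.negMulLog b| ≤ Real.negMulLog |a - b| := by
  rcases le_total b a with h | h
  · rw [show |a - b| = a - b from abs_of_nonneg (by linarith)] at habe ⊢
    calc |Real.negMulLog a - Real.negMulLog b|
        = |Real.negMulLog (b + (a - b)) - Real.negMulLog b| := by
          rw [show b + (a - b) = a by ring]
      _ ≤ Real.negMulLog (a - b) :=
          negMulLog_diff_le hb0 (by linarith) (by linarith) habe
  · rw [show |a - b| = b - a by rw [abs_sub_comm]; exact abs_of_nonneg (by linarith)] at habe ⊢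
    calc |Real.negMulLog a - Real.negMulLog b|
        = |Real.negMulLog (a + (b - a)) - Real.negMulLog a| := by
          rw [show a + (b - a) = b by ring, abs_sub_comm]
      _ ≤ Real.negMulLog (b - a) :=
          negMulLog_diff_le ha0 (by linarith) (by linarith) habe

lemma negMulLog_monotoneOn : MonotoneOn Real.negMulLog (Set.Icc 0 (Real.exp (-1))) := by
  apply monotoneOn_of_deriv_nonneg (convex_Icc _ _)
    Real.continuous_negMulLog.continuousOn
  · intro x hx
    rw [interior_Icc] at hx
    exact (Real.differentiableAt_negMulLog (ne_of_gt hx.1)).differentiableWithinAt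
  · intro x hx
    rw [interior_Icc] at hx
    rw [Real.deriv_negMulLog (ne_of_gt hx.1)]
    have : Real.log x ≤ -1 := (Real.log_le_iff_le_exp hx.1).mpr (le_of_lt hx.2)
    linarith

lemma sum_negMulLog_le {n : Type*} [Fintype n] (ε : n → ℝ) (hε : ∀ i, 0 ≤ ε i) :
    ∑ i, Real.negMulLog (ε i)
      ≤ Real.negMulLog (∑ i, ε i) + (∑ i, ε i) * Real.log (Fintype.card n) := by
  set e := ∑ i, ε i with he
  have he0 : 0 ≤ e := Finset.sum_nonneg fun i _ => hε i
  rcases eq_or_lt_of_le he0 with h | hepos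
  · have hall : ∀ i ∈ Finset.univ, ε i = 0 :=
      (Finset.sum_eq_zero_iff_of_nonneg (fun j _ => hε j)).mp h.symm
    rw [Finset.sum_congr rfl (fun i hi => by rw [hall i hi, Real.negMulLog_zero]), ← h]
    simp
  · have hne : (Finset.univ : Finset n).Nonempty := by
      by_contra hc
      rw [Finset.not_nonempty_iff_eq_empty] at hc
      rw [he, hc] at hepos
      simp at hepos
    have hd1 : 1 ≤ (Fintype.card n : ℝ) := by
      have := Fintype.card_pos_iff.mpr (Finset.univ_nonempty_iff.mp hne)
      exact_mod_cast this
    set D := (Fintype.card n : ℝ) with hD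
    have hkey : ∀ i, Real.negMulLog (ε i)
        ≤ ε i * (Real.log D - Real.log e) + (e / D - ε i) := by
      intro i
      rcases eq_or_lt_of_le (hε i) with h | hei
      · rw [← h, Real.negMulLog_zero]
        have : 0 < e / D := by positivity
        linarith
      · have hx : Real.log (e / (ε i * D)) ≤ e / (ε i * D) - 1 :=
          Real.log_le_sub_one_of_pos (by positivity)
        have hlogeq : Real.log (e / (ε i * D)) = Real.log e - Real.log (ε i) - Real.log D := by
          rw [Real.log_div (ne_of_gt hepos) (by positivity),
            Real.log_mul (ne_of_gt hei) (by positivity)]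
          ring
        rw [hlogeq] at hx
        have h2 : ε i * (Real.log e - Real.log (ε i) - Real.log D)
            ≤ ε i * (e / (ε i * D) - 1) := mul_le_mul_of_nonneg_left hx (le_of_lt hei)
        have h3 : ε i * (e / (ε i * D) - 1) = e / D - ε i := by
          field_simp
        rw [Real.negMulLog]
        nlinarith
    calc ∑ i, Real.negMulLog (ε i)
        ≤ ∑ i, (ε i * (Real.log D - Real.log e) + (e / D - ε i)) :=
          Finset.sum_le_sum fun i _ => hkey i
      _ = e * (Real.log D - Real.log e) + ((Fintype.card n : ℝ) * (e / D) - e) := by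
          rw [Finset.sum_add_distrib, ← Finset.sum_mul, Finset.sum_sub_distrib, ← he]
          simp [Finset.sum_const, nsmul_eq_mul]
      _ ≤ Real.negMulLog e + e * Real.log D := by
          have : (Fintype.card n : ℝ) * (e / D) = e := by
            rw [hD]; field_simp; exact div_self (by rw [← hD]; exact (by linarith : (0:ℝ) < D).ne')
          rw [this, Real.negMulLog]
          ring_nf
          nlinarith [le_refl (0:ℝ)]



lemma classical_fannes {d : ℕ} (p q : Fin d → ℝ)
    (hp0 : ∀ i, 0 ≤ p i) (hp1 : ∀ i, p i ≤ 1)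
    (hq0 : ∀ i, 0 ≤ q i) (hq1 : ∀ i, q i ≤ 1)
    {μ : ℝ} (hμ0 : 0 < μ) (hμe : μ ≤ Real.exp (-1))
    (hsum : ∑ i, |p i - q i| ≤ μ) :
    |∑ i, Real.negMulLog (p i) - ∑ i, Real.negMulLog (q i)|
      ≤ μ * Real.log d - μ * Real.log μ := by
  have hμ1 : μ ≤ 1 := le_trans hμe (by
    calc Real.exp (-1) ≤ Real.exp 0 := Real.exp_le_exp.mpr (by norm_num)
      _ = 1 := Real.exp_zero)
  have hημ : Real.negMulLog μ = - (μ * Real.log μ) := by rw [Real.negMulLog]; ring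
  rcases Nat.eq_zero_or_pos d with hd | hd
  · subst hd
    simp only [Finset.univ_eq_empty, Finset.sum_empty, sub_zero, abs_zero]
    have : 0 ≤ Real.negMulLog μ := Real.negMulLog_nonneg (le_of_lt hμ0) hμ1
    simp only [Nat.cast_zero, Real.log_zero, mul_zero, zero_sub]
    linarith
  set ε : Fin d → ℝ := fun i => |p i - q i| with hε
  have hε0 : ∀ i, 0 ≤ ε i := fun i => abs_nonneg _
  set e := ∑ i, ε i with he
  have he0 : 0 ≤ e := Finset.sum_nonneg fun i _ => hε0 i
  have heμ : e ≤ μ := hsum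
  have hεi : ∀ i, ε i ≤ e := fun i =>
    Finset.single_le_sum (fun j _ => hε0 j) (Finset.mem_univ i)
  have step1 : |∑ i, Real.negMulLog (p i) - ∑ i, Real.negMulLog (q i)|
      ≤ ∑ i, Real.negMulLog (ε i) := by
    rw [← Finset.sum_sub_distrib]
    refine le_trans (Finset.abs_sum_le_sum_abs _ _) (Finset.sum_le_sum fun i _ => ?_)
    exact negMulLog_abs_diff_le (hp0 i) (hp1 i) (hq0 i) (hq1 i)
      (le_trans (hεi i) (le_trans heμ hμe))
  have step2 : ∑ i, Real.negMulLog (ε i)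
      ≤ Real.negMulLog e + e * Real.log d := by
    have := sum_negMulLog_le ε hε0
    rwa [Fintype.card_fin] at this
  have step3 : Real.negMulLog e ≤ Real.negMulLog μ :=
    negMulLog_monotoneOn ⟨he0, le_trans heμ hμe⟩ ⟨le_of_lt hμ0, hμe⟩ heμ
  have hlogd : 0 ≤ Real.log d := Real.log_nonneg (by exact_mod_cast hd)
  have step4 : e * Real.log d ≤ μ * Real.log d :=
    mul_le_mul_of_nonneg_right heμ hlogd
  linarith [step1, step2, step3, step4]

end Fannes

/-- **Fannes inequality.** For density operators `X, Y` on a `d`-dimensional space with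
`‖X - Y‖₁ ≤ μ < 1/e`, one has `|S(X) - S(Y)| ≤ μ log d - μ log μ`. -/
theorem fannes_inequality {d : ℕ} (X Y : Matrix (Fin d) (Fin d) ℂ)
    (hX : IsDensity X) (hY : IsDensity Y) (μ : ℝ) (hμ0 : 0 < μ)
    (hdist : traceNorm (X - Y) ≤ μ) (hμe : μ < 1 / Real.exp 1) :
    |vnEntropy X - vnEntropy Y| ≤ μ * Real.logb 2 d - μ * Real.logb 2 μ := by
  have hXh : X.IsHermitian := hX.1.1
  have hYh : Y.IsHermitian := hY.1.1
  have hCh : (X - Y).IsHermitian := hXh.sub hYh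
  have h2 : (0:ℝ) < Real.log 2 := Real.log_pos one_lt_two
  have hμe' : μ ≤ Real.exp (-1) := by
    have hex : Real.exp (-1) = 1 / Real.exp 1 := by rw [Real.exp_neg, one_div]
    rw [hex]
    exact le_of_lt hμe
  have entropy_eq : ∀ (Z : Matrix (Fin d) (Fin d) ℂ) (hZ : Z.IsHermitian),
      vnEntropy Z = (∑ i, Real.negMulLog (hZ.eigenvalues i)) / Real.log 2 := by
    intro Z hZ
    rw [vnEntropy, dif_pos hZ, Finset.sum_div, ← Finset.sum_neg_distrib]
    apply Finset.sum_congr rfl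
    intro i _
    rw [Real.logb, Real.negMulLog]
    ring
  have eig_sum : ∀ (Z : Matrix (Fin d) (Fin d) ℂ) (hZ : Z.IsHermitian), Z.trace = 1 →
      ∑ k, hZ.eigenvalues k = 1 := by
    intro Z hZ htr
    have h1 : (∑ k, (hZ.eigenvalues k : ℂ)) = 1 := by
      rw [← Fannes.trace_eq_sum_eigenvalues hZ, htr]
    have h3 := congrArg Complex.re h1
    rw [Complex.re_sum] at h3
    simpa using h3
  have hsumX := eig_sum X hXh hX.2
  have hsumY := eig_sum Y hYh hY.2
  have hX0 : ∀ i, 0 ≤ hXh.eigenvalues i := fun i => hX.1.eigenvalues_nonneg i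
  have hY0 : ∀ i, 0 ≤ hYh.eigenvalues i := fun i => hY.1.eigenvalues_nonneg i
  have hX1 : ∀ i, hXh.eigenvalues i ≤ 1 := by
    intro i
    have := Finset.single_le_sum (fun j _ => hX0 j) (Finset.mem_univ i)
    rwa [hsumX] at this
  have hY1 : ∀ i, hYh.eigenvalues i ≤ 1 := by
    intro i
    have := Finset.single_le_sum (fun j _ => hY0 j) (Finset.mem_univ i)
    rwa [hsumY] at this
  have hTN : traceNorm (X - Y) = ∑ k, |hCh.eigenvalues k| := Fannes.traceNorm_hermitian hCh
  have hsum : ∑ i, |Fannes.sortEig hXh i - Fannes.sortEig hYh i| ≤ μ := by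
    refine le_trans (Fannes.eigenvalue_perturbation hXh hYh) ?_
    rw [← hTN]
    exact hdist
  have key := Fannes.classical_fannes (fun i => Fannes.sortEig hXh i)
    (fun i => Fannes.sortEig hYh i)
    (fun i => hX0 _) (fun i => hX1 _) (fun i => hY0 _) (fun i => hY1 _)
    hμ0 hμe' hsum
  rw [Fannes.sum_sortEig hXh Real.negMulLog, Fannes.sum_sortEig hYh Real.negMulLog] at key
  rw [entropy_eq X hXh, entropy_eq Y hYh, div_sub_div_same, abs_div, abs_of_pos h2]
  have hrhs : μ * Real.logb 2 (d : ℝ) - μ * Real.logb 2 μ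
      = (μ * Real.log d - μ * Real.log μ) / Real.log 2 := by
    rw [Real.logb, Real.logb]
    field_simp
  rw [hrhs]
  exact (div_le_div_iff_of_pos_right h2).mpr key
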